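/- Let A(z) = ∑_{k≥0} A_k (z−z_0)^k be a matrix power series over ℂ with radius of convergence R > 0, and let Y(z) = ∑_{k≥0} Y_k (z−z_0)^k be a formal matrix power series satisfying (z−z_0) Y'(z) = A(z) Y(z) formally, where additionally A_0 = 0 (so that the recursion k Y_k = ∑_{j<k} A_{k-j} Y_j determines Y_k for k ≥ 1 from Y_0). Then Y has radius of convergence at least R. -/

import Mathlib

/-- Non-resonant convergence for formal solutions of Fuchsian systems
(Theorem 2.13 / Heu Theorem 1.6, case `A₀ = 0`): if
`A(z) = ∑ A_k (z-z₀)^k` has radius of convergence at least `R > 0` (matrices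
identified with operators on `Fin r → ℂ`), `A 0 = 0`, and the formal power
series `Y = ∑ Y_k (z-z₀)^k` satisfies `(z-z₀) Y' = A Y` formally, i.e.
`k • Y_k = ∑_{j<k} A_{k-j} Y_j` for all `k`, then `Y` also has radius of
convergence at least `R`. -/
theorem formal_solution_radius_of_convergence
    (r : ℕ) (R : ℝ) (hR : 0 < R)
    (A Y : ℕ → ((Fin r → ℂ) →L[ℂ] (Fin r → ℂ)))
    (hA : ∀ ρ : ℝ, 0 ≤ ρ → ρ < R → Summable fun k => ‖A k‖ * ρ ^ k)
    (hA0 : A 0 = 0)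
    (hrec : ∀ k : ℕ, (k : ℂ) • Y k = ∑ j ∈ Finset.range k, (A (k - j)).comp (Y j)) :
    ∀ ρ : ℝ, 0 ≤ ρ → ρ < R → Summable fun k => ‖Y k‖ * ρ ^ k := by
  intro ρ hρ0 hρR
  set ρ₁ : ℝ := (ρ + R) / 2 with hρ₁def
  have hρ₁pos : 0 < ρ₁ := by rw [hρ₁def]; linarith
  have hρρ₁ : ρ < ρ₁ := by rw [hρ₁def]; linarith
  have hρ₁R : ρ₁ < R := by rw [hρ₁def]; linarith
  have hsum : Summable fun m => ‖A m‖ * ρ₁ ^ m := hA ρ₁ hρ₁pos.le hρ₁R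
  set a : ℕ → ℝ := fun m => ‖A m‖ * ρ₁ ^ m with ha
  set b : ℕ → ℝ := fun k => ‖Y k‖ * ρ₁ ^ k with hb
  have ha0 : ∀ m, 0 ≤ a m := fun m => by positivity
  have hb0 : ∀ k, 0 ≤ b k := fun k => by positivity
  set S : ℝ := ∑' m, a m with hSdef
  have hpartial : ∀ n, ∑ m ∈ Finset.range n, a m ≤ S :=
    fun n => Summable.sum_le_tsum _ (fun m _ => ha0 m) hsum
  set N : ℕ := ⌈S⌉₊ with hNdef
  have hSN : S ≤ N := Nat.le_ceil S
  set M : ℝ := ∑ j ∈ Finset.range (N + 1), b j with hMdef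
  have hM0 : 0 ≤ M := Finset.sum_nonneg fun j _ => hb0 j
  have key : ∀ k, b k ≤ M := by
    intro k
    induction k using Nat.strong_induction_on with
    | _ k ih =>
      rcases le_or_gt k N with hk | hk
      · exact Finset.single_le_sum (fun j _ => hb0 j) (Finset.mem_range.mpr (by omega))
      · have hkpos : (0:ℝ) < k := by exact_mod_cast (by omega : 0 < k)
        have hnorm : (k : ℝ) * ‖Y k‖ ≤ ∑ j ∈ Finset.range k, ‖A (k - j)‖ * ‖Y j‖ := by
          calc (k : ℝ) * ‖Y k‖ = ‖(k : ℂ) • Y k‖ := by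
                rw [norm_smul (k : ℂ) (Y k), Complex.norm_natCast]
            _ = ‖∑ j ∈ Finset.range k, (A (k - j)).comp (Y j)‖ := by rw [hrec k]
            _ ≤ ∑ j ∈ Finset.range k, ‖(A (k - j)).comp (Y j)‖ := norm_sum_le _ _
            _ ≤ ∑ j ∈ Finset.range k, ‖A (k - j)‖ * ‖Y j‖ :=
                Finset.sum_le_sum fun j _ => ContinuousLinearMap.opNorm_comp_le _ _
        have hbk : (k : ℝ) * b k ≤ ∑ j ∈ Finset.range k, a (k - j) * b j := by
          have h1 : (k : ℝ) * b k = ((k : ℝ) * ‖Y k‖) * ρ₁ ^ k := by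
            simp only [hb]; ring
          have h2 : ∀ j ∈ Finset.range k, a (k - j) * b j = (‖A (k - j)‖ * ‖Y j‖) * ρ₁ ^ k := by
            intro j hj
            have hjk : j ≤ k := (Finset.mem_range.mp hj).le
            simp only [ha, hb]
            rw [show ρ₁ ^ k = ρ₁ ^ (k - j) * ρ₁ ^ j by
              rw [← pow_add, Nat.sub_add_cancel hjk]]
            ring
          rw [h1, Finset.sum_congr rfl h2, ← Finset.sum_mul]
          exact mul_le_mul_of_nonneg_right hnorm (by positivity)
        have hA_sum : ∑ j ∈ Finset.range k, a (k - j) ≤ S := by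
          have hrefl : ∑ j ∈ Finset.range k, a (k - j)
              = ∑ j ∈ Finset.range k, a (j + 1) := by
            have := Finset.sum_range_reflect (fun j => a (j + 1)) k
            rw [← this]
            apply Finset.sum_congr rfl
            intro j hj
            have hjk : j < k := Finset.mem_range.mp hj
            congr 1
            omega
          rw [hrefl]
          have : ∑ j ∈ Finset.range k, a (j + 1) ≤ ∑ m ∈ Finset.range (k + 1), a m := by
            rw [Finset.sum_range_succ' a k]
            nlinarith [ha0 0]
          exact this.trans (hpartial (k + 1))
        have hchain : (k : ℝ) * b k ≤ M * S := by
          calc (k : ℝ) * b k ≤ ∑ j ∈ Finset.range k, a (k - j) * b j := hbk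
            _ ≤ ∑ j ∈ Finset.range k, a (k - j) * M :=
                Finset.sum_le_sum fun j hj =>
                  mul_le_mul_of_nonneg_left (ih j (Finset.mem_range.mp hj)) (ha0 _)
            _ = (∑ j ∈ Finset.range k, a (k - j)) * M := by rw [← Finset.sum_mul]
            _ ≤ S * M := mul_le_mul_of_nonneg_right hA_sum hM0
            _ = M * S := mul_comm _ _
        have hSk : S ≤ (k : ℝ) := hSN.trans (by exact_mod_cast (by omega : N ≤ k))
        nlinarith [hb0 k]
  -- compare with geometric series
  have hle : ∀ k, ‖Y k‖ * ρ ^ k ≤ M * (ρ / ρ₁) ^ k := by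
    intro k
    have hgeom : ‖Y k‖ * ρ ^ k = b k * (ρ / ρ₁) ^ k := by
      simp only [hb, div_pow]
      field_simp
    rw [hgeom]
    exact mul_le_mul_of_nonneg_right (key k) (by positivity)
  have hgs : Summable fun k => M * (ρ / ρ₁) ^ k := by
    apply Summable.mul_left
    exact summable_geometric_of_lt_one (by positivity) (by rw [div_lt_one hρ₁pos]; exact hρρ₁)
  exact Summable.of_nonneg_of_le (fun k => by positivity) hle hgs
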